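/- Let K be an n×n real symmetric positive-definite matrix, let ρ > 0, and let J be any m×n real matrix. Then the (n+2m)×(n+2m) block matrix M = [[K, 0, Jᵀ], [0, ρIₘ, Iₘ], [J, Iₘ, 0]] is nonsingular. (This is the structure of the search-direction system solved at each interior-point iteration of NCL: the extra residual variables r make the system solvable regardless of the rank of J.) -/

import Mathlib

open Matrix

/-- The (n+2m)×(n+2m) block matrix `M = [[K, 0, Jᵀ], [0, ρI, I], [J, I, 0]]`
arising from the NCL interior-point search-direction system. -/
noncomputable def nclKKTMatrix {n m : ℕ}
    (K : Matrix (Fin n) (Fin n) ℝ) (ρ : ℝ) (J : Matrix (Fin m) (Fin n) ℝ) :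
    Matrix (Fin n ⊕ (Fin m ⊕ Fin m)) (Fin n ⊕ (Fin m ⊕ Fin m)) ℝ :=
  Matrix.of fun p q =>
    match p, q with
    | Sum.inl i, Sum.inl j => K i j
    | Sum.inl _, Sum.inr (Sum.inl _) => 0
    | Sum.inl i, Sum.inr (Sum.inr j) => Jᵀ i j
    | Sum.inr (Sum.inl _), Sum.inl _ => 0
    | Sum.inr (Sum.inl i), Sum.inr (Sum.inl j) => ρ * (1 : Matrix (Fin m) (Fin m) ℝ) i j
    | Sum.inr (Sum.inl i), Sum.inr (Sum.inr j) => (1 : Matrix (Fin m) (Fin m) ℝ) i j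
    | Sum.inr (Sum.inr i), Sum.inl j => J i j
    | Sum.inr (Sum.inr i), Sum.inr (Sum.inl j) => (1 : Matrix (Fin m) (Fin m) ℝ) i j
    | Sum.inr (Sum.inr _), Sum.inr (Sum.inr _) => 0

/-- If `K` is symmetric positive definite and `ρ > 0`, then for any
m×n matrix `J`, the block matrix `M = [[K, 0, Jᵀ], [0, ρI, I], [J, I, 0]]` is
nonsingular (has trivial kernel). -/
theorem ncl_kkt_matrix_nonsingular
    {n m : ℕ}
    (K : Matrix (Fin n) (Fin n) ℝ) (hK : K.PosDef)
    (ρ : ℝ) (hρ : 0 < ρ)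
    (J : Matrix (Fin m) (Fin n) ℝ) :
    ∀ v : (Fin n ⊕ (Fin m ⊕ Fin m)) → ℝ,
      (nclKKTMatrix K ρ J).mulVec v = 0 → v = 0 := by
  intro v hv
  set x : Fin n → ℝ := fun i => v (Sum.inl i) with hxdef
  set r : Fin m → ℝ := fun i => v (Sum.inr (Sum.inl i)) with hrdef
  set l : Fin m → ℝ := fun i => v (Sum.inr (Sum.inr i)) with hldef
  -- Row equations
  have e1 : ∀ i, (∑ j, K i j * x j) + (∑ j, J j i * l j) = 0 := by
    intro i
    have h := congrFun hv (Sum.inl i)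
    simpa [nclKKTMatrix, Matrix.mulVec, dotProduct, Fintype.sum_sum_type,
      Matrix.transpose_apply] using h
  have e2 : ∀ i, ρ * r i + l i = 0 := by
    intro i
    have h := congrFun hv (Sum.inr (Sum.inl i))
    simpa [nclKKTMatrix, Matrix.mulVec, dotProduct, Fintype.sum_sum_type,
      Matrix.one_apply, mul_ite, Finset.sum_ite_eq, Finset.sum_ite_eq'] using h
  have e3 : ∀ i, (∑ j, J i j * x j) + r i = 0 := by
    intro i
    have h := congrFun hv (Sum.inr (Sum.inr i))
    simpa [nclKKTMatrix, Matrix.mulVec, dotProduct, Fintype.sum_sum_type,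
      Matrix.one_apply, mul_ite, Finset.sum_ite_eq, Finset.sum_ite_eq'] using h
  have hl : ∀ i, l i = -(ρ * r i) := fun i => by linarith [e2 i]
  have hJx : ∀ i, (∑ j, J i j * x j) = - r i := fun i => by linarith [e3 i]
  -- quadratic form identity
  have A : ∑ i, x i * ∑ j, K i j * x j = - ∑ i, x i * ∑ j, J j i * l j := by
    have h0 : ∑ i, (x i * ∑ j, K i j * x j + x i * ∑ j, J j i * l j) = 0 := by
      simp_rw [← mul_add]
      refine Finset.sum_eq_zero fun i _ => ?_
      rw [e1 i, mul_zero]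
    rw [Finset.sum_add_distrib] at h0
    linarith
  have B : ∑ i, x i * ∑ j, J j i * l j = ∑ j, l j * (∑ i, J j i * x i) := by
    simp_rw [Finset.mul_sum]
    rw [Finset.sum_comm]
    exact Finset.sum_congr rfl fun j _ => Finset.sum_congr rfl fun i _ => by ring
  have C : ∑ j, l j * (∑ i, J j i * x i) = ρ * ∑ j, r j * r j := by
    rw [Finset.mul_sum]
    refine Finset.sum_congr rfl fun j _ => ?_
    rw [hJx j, hl j]; ring
  have key : x ⬝ᵥ (K.mulVec x) = -(ρ * ∑ i, r i * r i) := by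
    have h1 : x ⬝ᵥ (K.mulVec x) = ∑ i, x i * ∑ j, K i j * x j := by
      simp [dotProduct, Matrix.mulVec]
    rw [h1, A, B, C]
  have hrr : 0 ≤ ∑ i, r i * r i := Finset.sum_nonneg fun i _ => mul_self_nonneg _
  have hx0 : x = 0 := by
    by_contra hx
    have h2 := hK.dotProduct_mulVec_pos hx
    simp only [RCLike.star_def, star_trivial] at h2
    have h3 : (0:ℝ) < x ⬝ᵥ (K.mulVec x) := by simpa using h2
    nlinarith [mul_nonneg hρ.le hrr]
  have hxKx : x ⬝ᵥ (K.mulVec x) = 0 := by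
    rw [hx0]; simp
  have hsum0 : ∑ i, r i * r i = 0 := by
    have h4 := key; rw [hxKx] at h4
    nlinarith
  have hr0 : ∀ i, r i = 0 := by
    intro i
    have h := (Finset.sum_eq_zero_iff_of_nonneg (fun i _ => mul_self_nonneg (r i))).mp hsum0 i (Finset.mem_univ i)
    nlinarith
  funext p
  rcases p with i | i | i
  · exact congrFun hx0 i
  · exact hr0 i
  · have := hl i
    rw [hr0 i] at this
    simpa using this
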